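/- (Network sparsification error.) Let a network with 1-Lipschitz activations σ_i satisfying σ_i(0) = 0, weight matrices W_1,...,W_L of maximum width m, data matrix X ∈ ℝ^{n×d}, and widths k_1,...,k_L ≥ 1 be given. Then there exist diagonal sampling matrices M_1,...,M_L, each M_i having at most k_i nonzero entries, such that the sparsified outputs X̂_0^T := X^T, X̂_i^T := Π_i σ_i(W_i M_i X̂_{i−1}^T) (where Π_i is Frobenius-norm projection onto the ball of radius ‖X‖_F Π_{j≤i}‖W_j‖_2) satisfy ‖σ_L(W_L ··· σ_1(W_1 X^T)···) − X̂_L^T‖_F ≤ ‖X‖_F (Π_{i=1}^L ‖W_i‖_2) Σ_{i=1}^L (2/√k_i)·(‖W_i‖_F/‖W_i‖_2). -/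

import Mathlib

open Matrix

noncomputable def frob {α β : Type*} [Fintype α] [Fintype β] (A : Matrix α β ℝ) : ℝ :=
  Real.sqrt (∑ i, ∑ j, (A i j) ^ 2)

noncomputable def vecNorm {α : Type*} [Fintype α] (v : α → ℝ) : ℝ :=
  Real.sqrt (∑ i, (v i) ^ 2)

/-- The spectral norm of a matrix. -/
noncomputable def specNorm {α β : Type*} [Fintype α] [Fintype β] (A : Matrix α β ℝ) : ℝ :=
  sSup {r | ∃ v : β → ℝ, vecNorm v ≤ 1 ∧ r = vecNorm (A.mulVec v)}

/-- Projection onto the Frobenius-norm ball of radius `R`. -/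
noncomputable def projBall {α β : Type*} [Fintype α] [Fintype β] (R : ℝ)
    (A : Matrix α β ℝ) : Matrix α β ℝ :=
  if frob A ≤ R then A else (R / frob A) • A

open Matrix Finset

section ip
variable {α β : Type*} [Fintype α] [Fintype β]

def F2 (A : Matrix α β ℝ) : ℝ := ∑ i, ∑ j, (A i j) ^ 2
def ip (A B : Matrix α β ℝ) : ℝ := ∑ i, ∑ j, A i j * B i j

lemma F2_nonneg (A : Matrix α β ℝ) : 0 ≤ F2 A := by
  apply Finset.sum_nonneg; intro i _; apply Finset.sum_nonneg; intro j _; positivity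

lemma frob_eq (A : Matrix α β ℝ) : frob A = Real.sqrt (F2 A) := rfl

lemma frob_nonneg (A : Matrix α β ℝ) : 0 ≤ frob A := Real.sqrt_nonneg _

lemma frob_sq (A : Matrix α β ℝ) : frob A ^ 2 = F2 A := Real.sq_sqrt (F2_nonneg A)

lemma F2_eq_ip (A : Matrix α β ℝ) : F2 A = ip A A := by
  simp [F2, ip, pow_two]

lemma ip_comm (A B : Matrix α β ℝ) : ip A B = ip B A := by
  simp [ip, mul_comm]

lemma ip_zero_right (A : Matrix α β ℝ) : ip A 0 = 0 := by simp [ip]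

lemma ip_add_right (A B C : Matrix α β ℝ) : ip A (B + C) = ip A B + ip A C := by
  simp [ip, mul_add, Finset.sum_add_distrib]

lemma ip_sub_right (A B C : Matrix α β ℝ) : ip A (B - C) = ip A B - ip A C := by
  simp [ip, mul_sub, Finset.sum_sub_distrib]

lemma ip_smul_right (r : ℝ) (A B : Matrix α β ℝ) : ip A (r • B) = r * ip A B := by
  simp only [ip, Matrix.smul_apply, smul_eq_mul, Finset.mul_sum, mul_left_comm]

lemma ip_sum_right {ι : Type*} (s : Finset ι) (A : Matrix α β ℝ) (f : ι → Matrix α β ℝ) :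
    ip A (∑ l ∈ s, f l) = ∑ l ∈ s, ip A (f l) := by
  classical
  induction s using Finset.induction with
  | empty => simp [ip_zero_right]
  | insert _ _ h ih => rw [Finset.sum_insert h, Finset.sum_insert h, ip_add_right, ih]

lemma F2_add (A B : Matrix α β ℝ) : F2 (A + B) = F2 A + 2 * ip A B + F2 B := by
  simp only [F2, ip, Matrix.add_apply, add_sq, Finset.sum_add_distrib, Finset.mul_sum, mul_assoc, mul_left_comm]

lemma F2_sub (A B : Matrix α β ℝ) : F2 (A - B) = F2 A - 2 * ip A B + F2 B := by
  simp only [F2, ip, Matrix.sub_apply, sub_sq, Finset.sum_add_distrib,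
    Finset.sum_sub_distrib, Finset.mul_sum, mul_assoc, mul_left_comm]

lemma F2_smul (r : ℝ) (A : Matrix α β ℝ) : F2 (r • A) = r ^ 2 * F2 A := by
  simp [F2, Finset.mul_sum, mul_pow]

lemma ip_le (A B : Matrix α β ℝ) : ip A B ≤ frob A * frob B := by
  have h := Real.sum_mul_le_sqrt_mul_sqrt (Finset.univ : Finset (α × β))
    (fun p => A p.1 p.2) (fun p => B p.1 p.2)
  simpa [ip, frob, Fintype.sum_prod_type] using h

lemma frob_le_of_F2_le {A : Matrix α β ℝ} {r : ℝ} (hr : 0 ≤ r) (h : F2 A ≤ r ^ 2) :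
    frob A ≤ r := by
  rw [frob_eq]
  calc Real.sqrt (F2 A) ≤ Real.sqrt (r ^ 2) := Real.sqrt_le_sqrt h
  _ = r := Real.sqrt_sq hr

end ip

section norms
variable {α β γ : Type*} [Fintype α] [Fintype β] [Fintype γ]

lemma frob_zero : frob (0 : Matrix α β ℝ) = 0 := by simp [frob]

lemma frob_smul (r : ℝ) (A : Matrix α β ℝ) : frob (r • A) = |r| * frob A := by
  rw [frob_eq, frob_eq, F2_smul, Real.sqrt_mul (sq_nonneg r), Real.sqrt_sq_eq_abs]

lemma frob_add_le (A B : Matrix α β ℝ) : frob (A + B) ≤ frob A + frob B := by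
  apply frob_le_of_F2_le (add_nonneg (frob_nonneg A) (frob_nonneg B))
  rw [F2_add, add_sq, frob_sq, frob_sq]
  nlinarith [ip_le A B]

lemma frob_sub_comm (A B : Matrix α β ℝ) : frob (A - B) = frob (B - A) := by
  have : A - B = (-1 : ℝ) • (B - A) := by module
  rw [this, frob_smul]
  norm_num

lemma frob_transpose (A : Matrix α β ℝ) : frob Aᵀ = frob A := by
  rw [frob, frob, Finset.sum_comm]
  rfl

lemma vecNorm_nonneg (v : α → ℝ) : 0 ≤ vecNorm v := Real.sqrt_nonneg _

lemma vecNorm_sq (v : α → ℝ) : vecNorm v ^ 2 = ∑ i, (v i) ^ 2 :=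
  Real.sq_sqrt (Finset.sum_nonneg fun i _ => sq_nonneg _)

lemma vecNorm_zero : vecNorm (0 : α → ℝ) = 0 := by simp [vecNorm]

lemma vecNorm_smul (r : ℝ) (v : α → ℝ) : vecNorm (r • v) = |r| * vecNorm v := by
  simp only [vecNorm, Pi.smul_apply, smul_eq_mul, mul_pow, ← Finset.mul_sum]
  rw [Real.sqrt_mul (sq_nonneg r), Real.sqrt_sq_eq_abs]

lemma vecNorm_eq_zero {v : α → ℝ} (h : vecNorm v = 0) : v = 0 := by
  have h2 : ∑ i, (v i) ^ 2 = 0 :=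
    le_antisymm (Real.sqrt_eq_zero'.1 h) (Finset.sum_nonneg fun i _ => sq_nonneg _)
  funext i
  have := (Finset.sum_eq_zero_iff_of_nonneg (fun i _ => sq_nonneg (v i))).1 h2 i (Finset.mem_univ i)
  exact pow_eq_zero_iff (by norm_num) |>.1 this

lemma vecNorm_mulVec_le_frob (A : Matrix α β ℝ) (v : β → ℝ) :
    vecNorm (A.mulVec v) ≤ frob A * vecNorm v := by
  rw [vecNorm, frob, vecNorm, ← Real.sqrt_mul (by positivity)]
  apply Real.sqrt_le_sqrt
  rw [Finset.sum_mul]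
  apply Finset.sum_le_sum
  intro i _
  have := Finset.sum_mul_sq_le_sq_mul_sq Finset.univ (fun j => A i j) v
  simpa [Matrix.mulVec, dotProduct] using this

lemma specNorm_bddAbove (A : Matrix α β ℝ) :
    BddAbove {r | ∃ v : β → ℝ, vecNorm v ≤ 1 ∧ r = vecNorm (A.mulVec v)} := by
  refine ⟨frob A, fun r hr => ?_⟩
  obtain ⟨v, hv, rfl⟩ := hr
  calc vecNorm (A.mulVec v) ≤ frob A * vecNorm v := vecNorm_mulVec_le_frob A v
  _ ≤ frob A * 1 := by apply mul_le_mul_of_nonneg_left hv (frob_nonneg A)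
  _ = frob A := mul_one _

lemma specNorm_nonneg (A : Matrix α β ℝ) : 0 ≤ specNorm A := by
  apply le_csSup (specNorm_bddAbove A)
  exact ⟨0, by simp [vecNorm_zero], by simp [vecNorm_zero, Matrix.mulVec_zero]⟩

lemma vecNorm_mulVec_le (A : Matrix α β ℝ) (v : β → ℝ) :
    vecNorm (A.mulVec v) ≤ specNorm A * vecNorm v := by
  by_cases hv : vecNorm v = 0
  · rw [vecNorm_eq_zero hv, Matrix.mulVec_zero, vecNorm_zero, vecNorm_zero, mul_zero]
  · have hvpos : 0 < vecNorm v := lt_of_le_of_ne (vecNorm_nonneg v) (Ne.symm hv)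
    have hu : vecNorm ((vecNorm v)⁻¹ • v) ≤ 1 := by
      rw [vecNorm_smul, abs_of_nonneg (inv_nonneg.2 (vecNorm_nonneg v)), inv_mul_cancel₀ hv]
    have hmem : vecNorm (A.mulVec ((vecNorm v)⁻¹ • v)) ≤ specNorm A :=
      le_csSup (specNorm_bddAbove A) ⟨_, hu, rfl⟩
    rw [Matrix.mulVec_smul, vecNorm_smul, abs_of_nonneg (inv_nonneg.2 (vecNorm_nonneg v))] at hmem
    calc vecNorm (A.mulVec v) = vecNorm v * ((vecNorm v)⁻¹ * vecNorm (A.mulVec v)) := by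
          field_simp
    _ ≤ vecNorm v * specNorm A := by apply mul_le_mul_of_nonneg_left hmem (le_of_lt hvpos)
    _ = specNorm A * vecNorm v := mul_comm _ _

lemma frob_mul_le (A : Matrix α β ℝ) (B : Matrix β γ ℝ) :
    frob (A * B) ≤ specNorm A * frob B := by
  apply frob_le_of_F2_le (mul_nonneg (specNorm_nonneg A) (frob_nonneg B))
  rw [mul_pow, frob_sq]
  have key : ∀ j, ∑ i, ((A * B) i j) ^ 2 ≤ specNorm A ^ 2 * ∑ l, (B l j) ^ 2 := by
    intro j
    have e1 : ∑ i, ((A * B) i j) ^ 2 = (vecNorm (A.mulVec fun l => B l j)) ^ 2 := by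
      rw [vecNorm, Real.sq_sqrt (Finset.sum_nonneg fun i _ => sq_nonneg _)]
      apply Finset.sum_congr rfl
      intro i _
      simp [Matrix.mul_apply, Matrix.mulVec, dotProduct]
    have e2 : (vecNorm fun l => B l j) ^ 2 = ∑ l, (B l j) ^ 2 := by
      rw [vecNorm, Real.sq_sqrt (Finset.sum_nonneg fun l _ => sq_nonneg _)]
    rw [e1, ← e2]
    have h := vecNorm_mulVec_le A (fun l => B l j)
    nlinarith [vecNorm_nonneg (A.mulVec fun l => B l j), vecNorm_nonneg (fun l => B l j),
      specNorm_nonneg A]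
  calc F2 (A * B) = ∑ j, ∑ i, ((A * B) i j) ^ 2 := by rw [F2]; rw [Finset.sum_comm]
  _ ≤ ∑ j, specNorm A ^ 2 * ∑ l, (B l j) ^ 2 := Finset.sum_le_sum fun j _ => key j
  _ = specNorm A ^ 2 * F2 B := by rw [← Finset.mul_sum, F2, Finset.sum_comm]

end norms

section proj
variable {α β : Type*} [Fintype α] [Fintype β]

lemma ip_smul_left (r : ℝ) (A B : Matrix α β ℝ) : ip (r • A) B = r * ip A B := by
  rw [ip_comm, ip_smul_right, ip_comm]

lemma frob_projBall_le {R : ℝ} (hR : 0 ≤ R) (A : Matrix α β ℝ) : frob (projBall R A) ≤ R := by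
  unfold projBall
  split_ifs with h
  · exact h
  · push_neg at h
    have hA : frob A ≠ 0 := ne_of_gt (lt_of_le_of_lt hR h)
    rw [frob_smul, abs_of_nonneg (div_nonneg hR (frob_nonneg A)), div_mul_cancel₀ _ hA]

lemma projBall_lip {R : ℝ} {B : Matrix α β ℝ} (hB : frob B ≤ R) (A : Matrix α β ℝ) :
    frob (projBall R A - B) ≤ frob (A - B) := by
  unfold projBall
  split_ifs with h
  · exact le_refl _
  · push_neg at h
    have hR : 0 ≤ R := le_trans (frob_nonneg B) hB
    have hfa : 0 < frob A := lt_of_le_of_lt hR h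
    set t := R / frob A with ht
    have ht0 : 0 ≤ t := div_nonneg hR (le_of_lt hfa)
    have ht1 : t ≤ 1 := by rw [ht, div_le_one hfa]; exact le_of_lt h
    have htfa : t * frob A = R := div_mul_cancel₀ _ (ne_of_gt hfa)
    apply frob_le_of_F2_le (frob_nonneg _)
    rw [frob_sq, F2_sub, F2_sub, F2_smul, ip_smul_left]
    have hip : ip A B ≤ frob A * R := by
      calc ip A B ≤ frob A * frob B := ip_le A B
      _ ≤ frob A * R := mul_le_mul_of_nonneg_left hB (le_of_lt hfa)
    have hF2A : F2 A = frob A ^ 2 := (frob_sq A).symm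
    nlinarith [mul_nonneg (sub_nonneg.2 ht1) (mul_nonneg (le_of_lt hfa) (sub_nonneg.2 (le_of_lt h))),
      mul_nonneg (sub_nonneg.2 ht1) (sub_nonneg.2 hip)]

end proj

section sampling
open Finset

lemma exists_avg_le {ι : Type*} [Fintype ι] (p x : ι → ℝ) (hp : ∀ i, 0 ≤ p i)
    (hsum : ∑ i, p i = 1) : ∃ i, p i ≠ 0 ∧ x i ≤ ∑ i, p i * x i := by
  by_contra hcon
  push_neg at hcon
  obtain ⟨i0, hi0⟩ : ∃ i, p i ≠ 0 := by
    by_contra hall; push_neg at hall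
    rw [Finset.sum_eq_zero (fun i _ => hall i)] at hsum; norm_num at hsum
  have hlt : ∑ i, p i * (∑ l, p l * x l) < ∑ i, p i * x i := by
    apply Finset.sum_lt_sum
    · intro i _
      by_cases hpi : p i = 0
      · simp [hpi]
      · exact mul_le_mul_of_nonneg_left (le_of_lt (hcon i hpi)) (hp i)
    · exact ⟨i0, Finset.mem_univ _,
        mul_lt_mul_of_pos_left (hcon i0 hi0) (lt_of_le_of_ne (hp i0) (Ne.symm hi0))⟩
  rw [← Finset.sum_mul, hsum, one_mul] at hlt
  exact lt_irrefl _ hlt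

lemma maurey {ι α β : Type*} [Fintype ι] [Fintype α] [Fintype β]
    (p : ι → ℝ) (Z : ι → Matrix α β ℝ) (T : Matrix α β ℝ) (V : ℝ)
    (hp : ∀ i, 0 ≤ p i) (hsum : ∑ i, p i = 1)
    (hmean : ∑ i, p i • Z i = T) (hvar : ∑ i, p i * F2 (Z i) ≤ V) :
    ∀ k : ℕ, ∃ s : Fin k → ι, (∀ t, p (s t) ≠ 0) ∧
      F2 ((∑ t, Z (s t)) - (k : ℝ) • T) ≤ k * V := by
  have h1 : ∑ i, p i * ip T (Z i) = F2 T := by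
    have e : ∑ i, p i * ip T (Z i) = ip T (∑ i, p i • Z i) := by
      rw [ip_sum_right]
      exact (Finset.sum_congr rfl fun i _ => (ip_smul_right (p i) T (Z i)).symm)
    rw [e, hmean, F2_eq_ip]
  have hVT : ∑ i, p i * F2 (Z i - T) ≤ V := by
    have e : ∀ i ∈ Finset.univ, p i * F2 (Z i - T)
        = p i * F2 (Z i) - 2 * (p i * ip T (Z i)) + p i * F2 T := by
      intro i _
      rw [F2_sub, ip_comm]; ring
    rw [Finset.sum_congr rfl e, Finset.sum_add_distrib, Finset.sum_sub_distrib,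
      ← Finset.mul_sum, h1, ← Finset.sum_mul, hsum, one_mul]
    nlinarith [F2_nonneg T]
  intro k
  induction k with
  | zero =>
    refine ⟨Fin.elim0, fun t => t.elim0, ?_⟩
    simp [F2]
  | succ k ih =>
    obtain ⟨s, hs, hF⟩ := ih
    set D := (∑ t, Z (s t)) - (k : ℝ) • T with hD
    have key : ∑ l, p l * F2 (D + (Z l - T)) ≤ (k + 1) * V := by
      have expand : ∀ l ∈ Finset.univ, p l * F2 (D + (Z l - T))
          = p l * F2 D + 2 * (p l * ip D (Z l - T)) + p l * F2 (Z l - T) := by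
        intro l _
        rw [F2_add]; ring
      rw [Finset.sum_congr rfl expand, Finset.sum_add_distrib, Finset.sum_add_distrib,
        ← Finset.sum_mul, hsum, one_mul]
      have cross : ∑ l, 2 * (p l * ip D (Z l - T)) = 0 := by
        have e2 : ∑ l, p l * ip D (Z l - T) = ip D (∑ l, p l • (Z l - T)) := by
          rw [ip_sum_right]
          exact (Finset.sum_congr rfl fun l _ => (ip_smul_right (p l) D (Z l - T)).symm)
        have z : ∑ l, p l • (Z l - T) = 0 := by
          simp only [smul_sub, Finset.sum_sub_distrib, hmean, ← Finset.sum_smul, hsum,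
            one_smul, sub_self]
        rw [← Finset.mul_sum, e2, z, ip_zero_right, mul_zero]
      rw [cross, add_zero]
      nlinarith [hF, hVT]
    obtain ⟨l, hl, hxl⟩ := exists_avg_le p (fun l => F2 (D + (Z l - T))) hp hsum
    refine ⟨(Fin.cons l s : Fin (k + 1) → ι), ?_, ?_⟩
    · intro t
      refine Fin.cases ?_ ?_ t
      · exact hl
      · exact hs
    · have e : (∑ t : Fin (k + 1), Z ((Fin.cons l s : Fin (k + 1) → ι) t)) - ((k + 1 : ℕ) : ℝ) • T
          = D + (Z l - T) := by
        rw [Fin.sum_univ_succ]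
        simp only [Fin.cons_zero, Fin.cons_succ]
        rw [hD]
        push_cast
        module
      rw [e]
      calc F2 (D + (Z l - T)) ≤ ∑ l, p l * F2 (D + (Z l - T)) := hxl
      _ ≤ (k + 1) * V := key
      _ = ((k + 1 : ℕ) : ℝ) * V := by push_cast; ring

end sampling

section existsSampling
open Finset

lemma exists_sampling {m n : ℕ} (W : Matrix (Fin m) (Fin m) ℝ) (A : Matrix (Fin m) (Fin n) ℝ)
    (kk : ℕ) (hkk : 1 ≤ kk) :
    ∃ M : Matrix (Fin m) (Fin m) ℝ, M.IsDiag ∧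
      (Finset.univ.filter fun l => M l l ≠ 0).card ≤ kk ∧
      frob (W * A - W * M * A) ≤ 2 / Real.sqrt kk * (frob W * frob A) := by
  classical
  have hrhs : 0 ≤ 2 / Real.sqrt kk * (frob W * frob A) := by
    apply mul_nonneg (div_nonneg (by norm_num) (Real.sqrt_nonneg _))
    exact mul_nonneg (frob_nonneg W) (frob_nonneg A)
  set cw : Fin m → ℝ := fun l => vecNorm (fun i => W i l) with hcw
  set ca : Fin m → ℝ := fun l => vecNorm (fun j => A l j) with hca
  set c : Fin m → ℝ := fun l => cw l * ca l with hc
  have hc0 : ∀ l, 0 ≤ c l := fun l => mul_nonneg (vecNorm_nonneg _) (vecNorm_nonneg _)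
  have hczero : ∀ l, c l = 0 → ∀ i j, W i l * A l j = 0 := by
    intro l hl i j
    rcases mul_eq_zero.1 hl with h | h
    · have := congrFun (vecNorm_eq_zero h) i
      simp only [Pi.zero_apply] at this
      rw [this, zero_mul]
    · have := congrFun (vecNorm_eq_zero h) j
      simp only [Pi.zero_apply] at this
      rw [this, mul_zero]
  set C : ℝ := ∑ l, c l with hC
  by_cases hCz : C = 0
  · -- degenerate case
    have hall : ∀ l, c l = 0 := by
      intro l
      have hsum0 : ∑ l, c l = 0 := by rw [← hC]; exact hCz
      exact (Finset.sum_eq_zero_iff_of_nonneg (fun l _ => hc0 l)).1 hsum0 l (Finset.mem_univ l)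
    have hWA : W * A = 0 := by
      ext i j
      rw [Matrix.mul_apply, Matrix.zero_apply]
      exact Finset.sum_eq_zero fun l _ => hczero l (hall l) i j
    refine ⟨0, Matrix.isDiag_zero, ?_, ?_⟩
    · simp
    · rw [Matrix.mul_zero, Matrix.zero_mul, sub_zero, hWA, frob_zero]
      exact hrhs
  · have hCpos : 0 < C := lt_of_le_of_ne (Finset.sum_nonneg fun l _ => hc0 l) (Ne.symm hCz)
    set p : Fin m → ℝ := fun l => c l / C with hp_def
    have hp : ∀ l, 0 ≤ p l := fun l => div_nonneg (hc0 l) (le_of_lt hCpos)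
    have hpsum : ∑ l, p l = 1 := by
      rw [hp_def]
      rw [← Finset.sum_div]
      exact div_self hCz
    set Z : Fin m → Matrix (Fin m) (Fin n) ℝ :=
      fun l => Matrix.of fun i j => (C / c l) * (W i l * A l j) with hZ
    have hmean : ∑ l, p l • Z l = W * A := by
      ext i j
      rw [Matrix.sum_apply, Matrix.mul_apply]
      apply Finset.sum_congr rfl
      intro l _
      by_cases hcl : c l = 0
      · simp [hZ, hp_def, hcl, hczero l hcl i j]
      · simp only [hZ, hp_def, Matrix.smul_apply, Matrix.of_apply, smul_eq_mul]
        field_simp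
    have hF2O : ∀ l, F2 (Z l) = (C / c l) ^ 2 * (c l ^ 2) := by
      intro l
      rw [hZ]
      have : F2 (Matrix.of fun i j => (C / c l) * (W i l * A l j))
          = (C / c l) ^ 2 * ∑ i, ∑ j, (W i l * A l j) ^ 2 := by
        simp [F2, mul_pow, Finset.mul_sum]
      rw [this]
      congr 1
      have e : ∑ i, ∑ j, (W i l * A l j) ^ 2 = (∑ i, W i l ^ 2) * (∑ j, A l j ^ 2) := by
        rw [Finset.sum_mul_sum]
        simp [mul_pow]
      rw [e]
      simp only [hc, hcw, hca]
      rw [mul_pow, vecNorm_sq, vecNorm_sq]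
    have hvar : ∑ l, p l * F2 (Z l) ≤ C ^ 2 := by
      have e : ∀ l ∈ Finset.univ, p l * F2 (Z l) = c l * C := by
        intro l _
        rw [hF2O l, hp_def]
        by_cases hcl : c l = 0
        · simp [hcl]
        · field_simp
      rw [Finset.sum_congr rfl e, ← Finset.sum_mul, ← hC, sq]
    obtain ⟨s, hs, hF⟩ := maurey p Z (W * A) (C ^ 2) hp hpsum hmean hvar kk
    set d : Fin m → ℝ :=
      fun l => ((Finset.univ.filter fun t => s t = l).card : ℝ) / kk * (C / c l) with hd
    refine ⟨Matrix.diagonal d, Matrix.isDiag_diagonal d, ?_, ?_⟩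
    · have hsub : (Finset.univ.filter fun l => Matrix.diagonal d l l ≠ 0)
          ⊆ Finset.univ.image s := by
        intro l hl
        rw [Finset.mem_filter] at hl
        rw [Matrix.diagonal_apply_eq] at hl
        by_contra hnot
        have : (Finset.univ.filter fun t => s t = l).card = 0 := by
          rw [Finset.card_eq_zero, Finset.filter_eq_empty_iff]
          intro t _
          intro he
          exact hnot (Finset.mem_image.2 ⟨t, Finset.mem_univ t, he⟩)
        rw [hd] at hl
        simp only [this, Nat.cast_zero, zero_div, zero_mul, ne_eq, not_true_eq_false] at hl
        exact hl.2
      calc (Finset.univ.filter fun l => Matrix.diagonal d l l ≠ 0).card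
          ≤ (Finset.univ.image s).card := Finset.card_le_card hsub
      _ ≤ (Finset.univ : Finset (Fin kk)).card := Finset.card_image_le
      _ = kk := by simp
    · have hkR : (0 : ℝ) < kk := by exact_mod_cast Nat.lt_of_lt_of_le Nat.zero_lt_one hkk
      have hMeq : W * Matrix.diagonal d * A = (kk : ℝ)⁻¹ • ∑ t, Z (s t) := by
        ext i j
        rw [Matrix.smul_apply, Matrix.sum_apply]
        rw [Matrix.mul_apply]
        have hWd : ∀ l, (W * Matrix.diagonal d) i l = W i l * d l := fun l =>
          Matrix.mul_diagonal ..
        have fib : ∑ t, Z (s t) i j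
            = ∑ l, ((Finset.univ.filter fun t => s t = l).card : ℝ) * (Z l i j) := by
          rw [← Finset.sum_fiberwise Finset.univ s (fun t => Z (s t) i j)]
          apply Finset.sum_congr rfl
          intro l _
          rw [Finset.sum_congr rfl (fun t ht => by
            rw [(Finset.mem_filter.1 ht).2]), Finset.sum_const, nsmul_eq_mul]
        rw [fib, smul_eq_mul, Finset.mul_sum]
        apply Finset.sum_congr rfl
        intro l _
        rw [hWd l, hd, hZ]
        simp only [Matrix.of_apply]
        ring
      have herr : W * A - W * Matrix.diagonal d * A
          = (-(kk : ℝ)⁻¹) • ((∑ t, Z (s t)) - (kk : ℝ) • (W * A)) := by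
        rw [hMeq]
        rw [neg_smul, smul_sub, smul_smul, inv_mul_cancel₀ (ne_of_gt hkR), one_smul]
        module
      have hsqk : Real.sqrt kk > 0 := Real.sqrt_pos.2 hkR
      have hCle : C ≤ frob W * frob A := by
        have cs := Real.sum_mul_le_sqrt_mul_sqrt (Finset.univ : Finset (Fin m)) cw ca
        have e1 : ∑ l, cw l ^ 2 = F2 W := by
          simp only [hcw, vecNorm_sq]
          rw [F2, Finset.sum_comm]
        have e2 : ∑ l, ca l ^ 2 = F2 A := by
          simp only [hca, vecNorm_sq]
          rfl
        rw [e1, e2] at cs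
        rw [frob_eq, frob_eq, hC]
        calc ∑ l, c l = ∑ l, cw l * ca l := by simp only [hc]
        _ ≤ _ := cs
      apply frob_le_of_F2_le hrhs
      rw [herr, F2_smul]
      have hb : F2 ((∑ t, Z (s t)) - (kk : ℝ) • (W * A)) ≤ kk * C ^ 2 := hF
      calc (-(kk : ℝ)⁻¹) ^ 2 * F2 ((∑ t, Z (s t)) - (kk : ℝ) • (W * A))
          ≤ (-(kk : ℝ)⁻¹) ^ 2 * (kk * C ^ 2) := by
            apply mul_le_mul_of_nonneg_left hb (sq_nonneg _)
      _ = C ^ 2 / kk := by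
            field_simp
      _ ≤ (2 / Real.sqrt kk * (frob W * frob A)) ^ 2 := by
            have hiden : (2 / Real.sqrt kk * (frob W * frob A)) ^ 2
                = 4 * (frob W * frob A) ^ 2 / kk := by
              rw [mul_pow, div_pow, Real.sq_sqrt (le_of_lt hkR)]
              ring
            have hCC : C * C ≤ (frob W * frob A) * (frob W * frob A) :=
              mul_le_mul hCle hCle (le_of_lt hCpos) (le_trans (le_of_lt hCpos) hCle)
            rw [hiden]
            gcongr
            nlinarith [hCC, sq_nonneg (frob W * frob A)]

end existsSampling

open Classical in
/-- Network sparsification error via importance-sampled matrix multiplication. -/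
theorem network_sparsification {m n : ℕ} (L : ℕ)
    (X : Matrix (Fin n) (Fin m) ℝ)
    (W : ℕ → Matrix (Fin m) (Fin m) ℝ)
    (σ : ℕ → Matrix (Fin m) (Fin n) ℝ → Matrix (Fin m) (Fin n) ℝ)
    (hσ0 : ∀ i, σ i 0 = 0)
    (hσlip : ∀ i A B, frob (σ i A - σ i B) ≤ frob (A - B))
    (k : ℕ → ℕ) (hk : ∀ i, 1 ≤ k i) :
    ∃ M : ℕ → Matrix (Fin m) (Fin m) ℝ,
      (∀ i, (M i).IsDiag) ∧
      (∀ i, (Finset.univ.filter fun l => M i l l ≠ 0).card ≤ k i) ∧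
      ∀ Xseq hatX : ℕ → Matrix (Fin m) (Fin n) ℝ,
        Xseq 0 = Xᵀ →
        (∀ j, Xseq (j + 1) = σ j (W j * Xseq j)) →
        hatX 0 = Xᵀ →
        (∀ j, hatX (j + 1) =
          projBall (frob X * ∏ i ∈ Finset.range (j + 1), specNorm (W i))
            (σ j (W j * M j * hatX j))) →
        frob (Xseq L - hatX L) ≤
          frob X * (∏ i ∈ Finset.range L, specNorm (W i)) *
            ∑ i ∈ Finset.range L, (2 / Real.sqrt (k i)) * (frob (W i) / specNorm (W i)) := by
  classical
  set R : ℕ → ℝ := fun j => frob X * ∏ i ∈ Finset.range j, specNorm (W i) with hRdef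
  let H : ℕ → Matrix (Fin m) (Fin n) ℝ := fun j =>
    Nat.rec Xᵀ (fun j Hj =>
      projBall (R (j + 1))
        (σ j (W j * Classical.choose (exists_sampling (W j) Hj (k j) (hk j)) * Hj))) j
  let M : ℕ → Matrix (Fin m) (Fin m) ℝ := fun j =>
    Classical.choose (exists_sampling (W j) (H j) (k j) (hk j))
  have hH0 : H 0 = Xᵀ := rfl
  have hHsucc : ∀ j, H (j + 1) = projBall (R (j + 1)) (σ j (W j * M j * H j)) := fun j => rfl
  have hspec := fun j => Classical.choose_spec (exists_sampling (W j) (H j) (k j) (hk j))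
  have hR0 : ∀ j, 0 ≤ R j := fun j =>
    mul_nonneg (frob_nonneg X) (Finset.prod_nonneg fun i _ => specNorm_nonneg (W i))
  have hRsucc : ∀ j, R (j + 1) = R j * specNorm (W j) := by
    intro j
    rw [hRdef]
    simp only
    rw [Finset.prod_range_succ, mul_assoc]
  refine ⟨M, fun i => (hspec i).1, fun i => (hspec i).2.1, ?_⟩
  intro Xseq hatX h0 hrec hh0 hhrec
  have hhat : ∀ j, hatX j = H j := by
    intro j
    induction j with
    | zero => rw [hh0, hH0]
    | succ j ih => rw [hhrec j, ih, ← hHsucc j]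
  have hXb : ∀ j, frob (Xseq j) ≤ R j := by
    intro j
    induction j with
    | zero =>
      rw [h0, frob_transpose, hRdef]
      simp
    | succ j ih =>
      rw [hrec j]
      have h1 : frob (σ j (W j * Xseq j)) = frob (σ j (W j * Xseq j) - σ j 0) := by
        rw [hσ0, sub_zero]
      rw [h1]
      calc frob (σ j (W j * Xseq j) - σ j 0) ≤ frob (W j * Xseq j - 0) := hσlip j _ _
      _ = frob (W j * Xseq j) := by rw [sub_zero]
      _ ≤ specNorm (W j) * frob (Xseq j) := frob_mul_le _ _
      _ ≤ specNorm (W j) * R j := mul_le_mul_of_nonneg_left ih (specNorm_nonneg _)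
      _ = R (j + 1) := by rw [hRsucc j, mul_comm]
  have hHb : ∀ j, frob (H j) ≤ R j := by
    intro j
    cases j with
    | zero =>
      rw [hH0, frob_transpose, hRdef]
      simp
    | succ j =>
      rw [hHsucc j]
      exact frob_projBall_le (hR0 (j + 1)) _
  have hfz : ∀ j, specNorm (W j) = 0 → frob (W j) = 0 := by
    intro j h
    refine le_antisymm ?_ (frob_nonneg _)
    calc frob (W j) = frob (W j * 1) := by rw [Matrix.mul_one]
    _ ≤ specNorm (W j) * frob (1 : Matrix (Fin m) (Fin m) ℝ) := frob_mul_le _ _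
    _ = 0 := by rw [h, zero_mul]
  have key : ∀ j, frob (Xseq j - H j) ≤
      R j * ∑ i ∈ Finset.range j, (2 / Real.sqrt (k i)) * (frob (W i) / specNorm (W i)) := by
    intro j
    induction j with
    | zero =>
      rw [h0, hH0, sub_self, frob_zero]
      simp
    | succ j ih =>
      have hlip : frob (Xseq (j + 1) - H (j + 1)) ≤
          frob (σ j (W j * M j * H j) - σ j (W j * Xseq j)) := by
        rw [frob_sub_comm, hHsucc j]
        have hB : frob (Xseq (j + 1)) ≤ R (j + 1) := hXb (j + 1)
        have := projBall_lip hB (σ j (W j * M j * H j))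
        calc frob (projBall (R (j + 1)) (σ j (W j * M j * H j)) - Xseq (j + 1))
            ≤ frob (σ j (W j * M j * H j) - Xseq (j + 1)) := this
        _ = frob (σ j (W j * M j * H j) - σ j (W j * Xseq j)) := by rw [hrec j]
      have hlip2 : frob (σ j (W j * M j * H j) - σ j (W j * Xseq j)) ≤
          frob (W j * M j * H j - W j * Xseq j) := hσlip j _ _
      have hsplit : frob (W j * M j * H j - W j * Xseq j) ≤
          frob (W j * H j - W j * M j * H j) + frob (W j * (Xseq j - H j)) := by
        have e : W j * M j * H j - W j * Xseq j
            = ((-1 : ℝ) • (W j * H j - W j * M j * H j)) + ((-1 : ℝ) • (W j * (Xseq j - H j))) := by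
          rw [Matrix.mul_sub]
          module
        rw [e]
        calc frob _ ≤ frob ((-1 : ℝ) • (W j * H j - W j * M j * H j))
              + frob ((-1 : ℝ) • (W j * (Xseq j - H j))) := frob_add_le _ _
        _ = _ := by rw [frob_smul, frob_smul]; norm_num
      have hterm1 : frob (W j * H j - W j * M j * H j) ≤
          2 / Real.sqrt (k j) * (frob (W j) * R j) := by
        calc frob (W j * H j - W j * M j * H j)
            ≤ 2 / Real.sqrt (k j) * (frob (W j) * frob (H j)) := (hspec j).2.2
        _ ≤ 2 / Real.sqrt (k j) * (frob (W j) * R j) := by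
            apply mul_le_mul_of_nonneg_left
              (mul_le_mul_of_nonneg_left (hHb j) (frob_nonneg _))
              (div_nonneg (by norm_num) (Real.sqrt_nonneg _))
      have hterm2 : frob (W j * (Xseq j - H j)) ≤
          specNorm (W j) * (R j * ∑ i ∈ Finset.range j,
            (2 / Real.sqrt (k i)) * (frob (W i) / specNorm (W i))) := by
        calc frob (W j * (Xseq j - H j)) ≤ specNorm (W j) * frob (Xseq j - H j) :=
              frob_mul_le _ _
        _ ≤ _ := mul_le_mul_of_nonneg_left ih (specNorm_nonneg _)
      have hkey2 : 2 / Real.sqrt (k j) * (frob (W j) * R j) ≤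
          R j * specNorm (W j) * ((2 / Real.sqrt (k j)) * (frob (W j) / specNorm (W j))) := by
        by_cases hs : specNorm (W j) = 0
        · rw [hfz j hs, hs]
          simp
        · have hcanc : specNorm (W j) * (frob (W j) / specNorm (W j)) = frob (W j) := by
            field_simp
          apply le_of_eq
          calc 2 / Real.sqrt (k j) * (frob (W j) * R j)
              = R j * (2 / Real.sqrt (k j)) * (specNorm (W j) * (frob (W j) / specNorm (W j))) := by
                rw [hcanc]; ring
          _ = R j * specNorm (W j) * (2 / Real.sqrt (k j) * (frob (W j) / specNorm (W j))) := by
                ring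
      calc frob (Xseq (j + 1) - H (j + 1))
          ≤ frob (W j * H j - W j * M j * H j) + frob (W j * (Xseq j - H j)) :=
            le_trans hlip (le_trans hlip2 hsplit)
      _ ≤ 2 / Real.sqrt (k j) * (frob (W j) * R j)
            + specNorm (W j) * (R j * ∑ i ∈ Finset.range j,
              (2 / Real.sqrt (k i)) * (frob (W i) / specNorm (W i))) :=
            add_le_add hterm1 hterm2
      _ ≤ R (j + 1) * ∑ i ∈ Finset.range (j + 1),
            (2 / Real.sqrt (k i)) * (frob (W i) / specNorm (W i)) := by
          rw [Finset.sum_range_succ, hRsucc j, mul_add]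
          have e2 : specNorm (W j) * (R j * ∑ i ∈ Finset.range j,
              (2 / Real.sqrt (k i)) * (frob (W i) / specNorm (W i)))
              = R j * specNorm (W j) * ∑ i ∈ Finset.range j,
              (2 / Real.sqrt (k i)) * (frob (W i) / specNorm (W i)) := by ring
          linarith [hkey2, e2]
  have final := key L
  rw [hhat L]
  calc frob (Xseq L - H L) ≤ _ := final
  _ = _ := by rw [hRdef]
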